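/- Let A = (A_1,…,A_n) be an n-tuple of positive semidefinite hermitian n×n matrices, and let α, α^1,…,α^m ∈ L_n satisfy α = Σ_{j=1}^m γ_j α^j with γ_j ≥ 0 and Σ γ_j = 1. Then the capacity is log-concave along such convex combinations: Cap^{(α)} ≥ Π_{j=1}^m (Cap^{(α^j)})^{γ_j}. -/

import Mathlib

open Matrix BigOperators Finset ComplexOrder Nat

/-- The capacity of a tuple of positive semidefinite hermitian matrices:
`Cap(B) = inf { det (Σ xᵢ Bᵢ) : xᵢ > 0, Π xᵢ = 1 }`. -/
noncomputable def capacity {n : ℕ} (A : Fin n → Matrix (Fin n) (Fin n) ℂ) : ℝ :=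
  sInf {y : ℝ | ∃ x : Fin n → ℝ, (∀ i, 0 < x i) ∧ (∏ i, x i = 1) ∧
    y = ((∑ i, (x i : ℂ) • A i).det).re}

section Helpers

set_option linter.unusedSectionVars false

variable {ι : Type*} [Fintype ι] [DecidableEq ι]

lemma psd_real_smul {M : Matrix ι ι ℂ} (hM : M.PosSemidef) {c : ℝ} (hc : 0 ≤ c) :
    ((c : ℂ) • M).PosSemidef := by
  rw [posSemidef_iff_dotProduct_mulVec]
  constructor
  · unfold Matrix.IsHermitian
    rw [conjTranspose_smul, hM.1.eq]
    congr 1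
    simp [Complex.ext_iff]
  · intro x
    rw [smul_mulVec, dotProduct_smul, smul_eq_mul]
    have h1 : (0:ℂ) ≤ (c:ℂ) := by rw [Complex.nonneg_iff]; simp [hc]
    exact mul_nonneg h1 (hM.dotProduct_mulVec_nonneg x)

lemma herm_det_real {M : Matrix ι ι ℂ} (hM : M.IsHermitian) :
    M.det = ((∏ i, hM.eigenvalues i : ℝ) : ℂ) := by
  rw [hM.det_eq_prod_eigenvalues, Complex.ofReal_prod]; norm_cast

lemma psd_det_re_nonneg {M : Matrix ι ι ℂ} (hM : M.PosSemidef) : 0 ≤ M.det.re := by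
  rw [herm_det_real hM.1, Complex.ofReal_re]
  exact Finset.prod_nonneg fun i _ => hM.eigenvalues_nonneg i

lemma herm_det_re_cast {M : Matrix ι ι ℂ} (hM : M.IsHermitian) : ((M.det.re : ℝ) : ℂ) = M.det := by
  rw [herm_det_real hM, Complex.ofReal_re]

lemma psd_sum {κ : Type*} (s : Finset κ) (M : κ → Matrix ι ι ℂ) (c : κ → ℝ)
    (hM : ∀ j ∈ s, (M j).PosSemidef) (hc : ∀ j ∈ s, 0 ≤ c j) :
    (∑ j ∈ s, (c j : ℂ) • M j).PosSemidef := by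
  classical
  induction s using Finset.induction with
  | empty => simpa using Matrix.PosSemidef.zero
  | insert _ _ h ih =>
    rw [Finset.sum_insert h]
    exact (psd_real_smul (hM _ (Finset.mem_insert_self _ _)) (hc _ (Finset.mem_insert_self _ _))).add
      (ih (fun j hj => hM j (Finset.mem_insert_of_mem hj)) (fun j hj => hc j (Finset.mem_insert_of_mem hj)))

lemma det_re_two_concave {M N : Matrix ι ι ℂ} (hM : M.PosSemidef) (hN : N.PosSemidef)
    {a b : ℝ} (ha : 0 ≤ a) (hb : 0 ≤ b) (hab : a + b = 1) :
    M.det.re ^ a * N.det.re ^ b ≤ (((a:ℂ) • M + (b:ℂ) • N).det).re := by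
  rcases eq_or_lt_of_le ha with rfl | ha'
  · have hb1 : b = 1 := by linarith
    subst hb1; simp
  rcases eq_or_lt_of_le hb with rfl | hb'
  · have ha1 : a = 1 := by linarith
    subst ha1; simp
  rcases eq_or_lt_of_le (psd_det_re_nonneg hM) with hdM | hdM
  · rw [← hdM, Real.zero_rpow (ne_of_gt ha'), zero_mul]
    exact psd_det_re_nonneg ((psd_real_smul hM ha).add (psd_real_smul hN hb))
  open scoped MatrixOrder in set S := CFC.sqrt M with hSdef
  open scoped MatrixOrder in have hS : S.PosSemidef := (CFC.sqrt_nonneg M).posSemidef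
  open scoped MatrixOrder in have hSS : S * S = M := CFC.sqrt_mul_sqrt_self M hM.nonneg
  have hdetSS : S.det * S.det = M.det := by rw [← det_mul, hSS]
  have hdetM_ne : M.det ≠ 0 := by
    rw [← herm_det_re_cast hM.1]
    simpa using ne_of_gt hdM
  have hdetS_ne : S.det ≠ 0 := fun h => hdetM_ne (by rw [← hdetSS, h, zero_mul])
  have hSu : IsUnit S.det := isUnit_iff_ne_zero.mpr hdetS_ne
  have hSinv : S * S⁻¹ = 1 := mul_nonsing_inv _ hSu
  have hSinv' : S⁻¹ * S = 1 := nonsing_inv_mul _ hSu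
  have hSinvH : S⁻¹ᴴ = S⁻¹ := by rw [conjTranspose_nonsing_inv, hS.1.eq]
  set X := S⁻¹ * N * S⁻¹ with hXdef
  have hX : X.PosSemidef := by
    have := hN.mul_mul_conjTranspose_same S⁻¹
    rwa [hSinvH] at this
  have hkey : (a:ℂ) • M + (b:ℂ) • N = S * ((a:ℂ) • (1 : Matrix ι ι ℂ) + (b:ℂ) • X) * S := by
    rw [Matrix.mul_add, Matrix.add_mul, Matrix.mul_smul, Matrix.smul_mul,
      Matrix.mul_smul, Matrix.smul_mul, mul_one, hSS]
    congr 2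
    have : S * (S⁻¹ * N * S⁻¹) * S = (S * S⁻¹) * N * (S⁻¹ * S) := by
      simp only [Matrix.mul_assoc]
    rw [this, hSinv, hSinv', one_mul, mul_one]
  set lam := hX.1.eigenvalues with hlam
  have hlam0 : ∀ i, 0 ≤ lam i := hX.eigenvalues_nonneg
  have hdetaX : ((a:ℂ) • (1 : Matrix ι ι ℂ) + (b:ℂ) • X).det
      = ((∏ i, (a + b * lam i) : ℝ) : ℂ) := by
    have hspec := hX.1.spectral_theorem
    rw [Unitary.conjStarAlgAut_apply] at hspec
    set U : Matrix ι ι ℂ := (hX.1.eigenvectorUnitary : Matrix ι ι ℂ) with hU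
    have hUU : U * star U = 1 := (Matrix.mem_unitaryGroup_iff).mp hX.1.eigenvectorUnitary.2
    have h1 : (a:ℂ) • (1 : Matrix ι ι ℂ) + (b:ℂ) • X
        = U * ((a:ℂ) • (1 : Matrix ι ι ℂ) + (b:ℂ) • diagonal (RCLike.ofReal ∘ lam)) * star U := by
      rw [Matrix.mul_add, Matrix.add_mul]
      congr 1
      · rw [Matrix.mul_smul, Matrix.smul_mul, mul_one, hUU]
      · rw [Matrix.mul_smul, Matrix.smul_mul, ← hspec]
    have hUdet : U.det * (star U).det = 1 := by rw [← det_mul, hUU, det_one]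
    rw [h1, det_mul, det_mul, mul_right_comm, hUdet, one_mul,
      smul_one_eq_diagonal, ← diagonal_smul, diagonal_add, det_diagonal, Complex.ofReal_prod]
    apply Finset.prod_congr rfl
    intro i _
    simp [smul_eq_mul]
  have hre : (((a:ℂ) • M + (b:ℂ) • N).det).re = (∏ i, (a + b * lam i)) * M.det.re := by
    have e1 : S.det * ((a:ℂ) • (1 : Matrix ι ι ℂ) + (b:ℂ) • X).det * S.det
        = ((a:ℂ) • (1 : Matrix ι ι ℂ) + (b:ℂ) • X).det * M.det := by
      rw [← hdetSS]; ring
    rw [hkey, det_mul, det_mul, e1, hdetaX, ← herm_det_re_cast hM.1,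
      ← Complex.ofReal_mul, Complex.ofReal_re]
    simp
  have hX_det : ((∏ i, lam i : ℝ) : ℂ) = (M.det)⁻¹ * N.det := by
    rw [← herm_det_real hX.1, hXdef, det_mul, det_mul, det_nonsing_inv, Ring.inverse_eq_inv']
    rw [← hdetSS]
    field_simp
  have hprodlam : ∏ i, lam i = N.det.re / M.det.re := by
    rw [← herm_det_re_cast hM.1, ← herm_det_re_cast hN.1, ← Complex.ofReal_inv,
      ← Complex.ofReal_mul] at hX_det
    rw [Complex.ofReal_inj.mp hX_det, div_eq_inv_mul]
  have key2 : ∀ i, lam i ^ b ≤ a + b * lam i := by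
    intro i
    have := Real.geom_mean_le_arith_mean_weighted (Finset.univ : Finset (Fin 2))
      ![a, b] ![1, lam i] (by intro j _; fin_cases j <;> simp [ha, hb])
      (by simp [Fin.sum_univ_two, hab]) (by intro j _; fin_cases j <;> simp [hlam0 i])
    simpa [Fin.prod_univ_two, Fin.sum_univ_two, Real.one_rpow] using this
  rw [hre]
  have hdN : 0 ≤ N.det.re := psd_det_re_nonneg hN
  calc M.det.re ^ a * N.det.re ^ b
      = M.det.re * ∏ i, lam i ^ b := by
        rw [Real.finset_prod_rpow _ _ (fun i _ => hlam0 i), hprodlam,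
          Real.div_rpow hdN (le_of_lt hdM)]
        have hab' : a = 1 - b := by linarith
        rw [hab', Real.rpow_sub hdM, Real.rpow_one]
        ring
    _ ≤ M.det.re * ∏ i, (a + b * lam i) := by
        apply mul_le_mul_of_nonneg_left _ (le_of_lt hdM)
        exact Finset.prod_le_prod (fun i _ => Real.rpow_nonneg (hlam0 i) b)
          (fun i _ => key2 i)
    _ = (∏ i, (a + b * lam i)) * M.det.re := mul_comm _ _

lemma det_re_concave {κ : Type*} (s : Finset κ) (M : κ → Matrix ι ι ℂ)
    (hM : ∀ j ∈ s, (M j).PosSemidef) (γ : κ → ℝ) (hγ : ∀ j ∈ s, 0 ≤ γ j)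
    (h1 : ∑ j ∈ s, γ j = 1) :
    ∏ j ∈ s, ((M j).det.re) ^ (γ j) ≤ ((∑ j ∈ s, (γ j : ℂ) • M j).det).re := by
  classical
  revert hM hγ h1
  induction s using Finset.induction generalizing γ with
  | empty => intro _ _ h1; simp at h1
  | @insert a s ha ih =>
    intro hM hγ h1
    rw [Finset.sum_insert ha] at h1
    have hγa := hγ a (Finset.mem_insert_self _ _)
    have hMa := hM a (Finset.mem_insert_self _ _)
    have hγs : ∀ j ∈ s, 0 ≤ γ j := fun j hj => hγ j (Finset.mem_insert_of_mem hj)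
    have hMs : ∀ j ∈ s, (M j).PosSemidef := fun j hj => hM j (Finset.mem_insert_of_mem hj)
    set c : ℝ := ∑ j ∈ s, γ j with hc
    have hc0 : 0 ≤ c := Finset.sum_nonneg hγs
    rcases eq_or_lt_of_le hc0 with hc0' | hc0'
    · -- c = 0 : all γ on s are zero and γ a = 1
      have hzero : ∀ j ∈ s, γ j = 0 := by
        intro j hj
        exact (Finset.sum_eq_zero_iff_of_nonneg hγs).mp hc0'.symm j hj
      have hγa1 : γ a = 1 := by rw [← hc0'] at h1; linarith
      rw [Finset.prod_insert ha, Finset.sum_insert ha, hγa1]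
      have e1 : ∏ j ∈ s, ((M j).det.re) ^ (γ j) = 1 := by
        apply Finset.prod_eq_one
        intro j hj
        rw [hzero j hj, Real.rpow_zero]
      have e2 : ∑ j ∈ s, (γ j : ℂ) • M j = 0 := by
        apply Finset.sum_eq_zero
        intro j hj
        rw [hzero j hj]
        simp
      rw [e1, e2, add_zero, Real.rpow_one, mul_one]
      simp
    · -- c > 0
      have ihc := ih (fun j => γ j / c) hMs (fun j hj => div_nonneg (hγs j hj) hc0) (by
        show (∑ j ∈ s, γ j / c) = 1
        rw [← Finset.sum_div, ← hc, div_self (ne_of_gt hc0')])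
      set N : Matrix ι ι ℂ := ∑ j ∈ s, ((γ j / c : ℝ) : ℂ) • M j with hN
      have hNpsd : N.PosSemidef :=
        psd_sum s M _ hMs (fun j hj => div_nonneg (hγs j hj) hc0)
      have htwo := det_re_two_concave hMa hNpsd hγa hc0 h1
      have hcN : (c : ℂ) • N = ∑ j ∈ s, (γ j : ℂ) • M j := by
        rw [hN, Finset.smul_sum]
        apply Finset.sum_congr rfl
        intro j hj
        rw [smul_smul, ← Complex.ofReal_mul, mul_div_cancel₀ _ (ne_of_gt hc0')]
      rw [hcN] at htwo
      rw [Finset.prod_insert ha, Finset.sum_insert ha]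
      refine le_trans (mul_le_mul_of_nonneg_left ?_ (Real.rpow_nonneg (psd_det_re_nonneg hMa) _)) htwo
      -- ∏ j ∈ s, d_j ^ γ j ≤ N.det.re ^ c
      have e3 : ∏ j ∈ s, ((M j).det.re) ^ (γ j) = (∏ j ∈ s, ((M j).det.re) ^ (γ j / c)) ^ c := by
        rw [← Real.finset_prod_rpow _ _
          (fun j hj => Real.rpow_nonneg (psd_det_re_nonneg (hMs j hj)) _)]
        apply Finset.prod_congr rfl
        intro j hj
        rw [← Real.rpow_mul (psd_det_re_nonneg (hMs j hj)), div_mul_cancel₀ _ (ne_of_gt hc0')]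
      rw [e3]
      exact Real.rpow_le_rpow
        (Finset.prod_nonneg fun j hj => Real.rpow_nonneg (psd_det_re_nonneg (hMs j hj)) _)
        ihc hc0

lemma rpow_finset_sum {x : ℝ} (hx : 0 < x) {κ : Type*} (s : Finset κ) (e : κ → ℝ) :
    x ^ (∑ j ∈ s, e j) = ∏ j ∈ s, x ^ e j := by
  classical
  induction s using Finset.induction with
  | empty => simp
  | insert _ _ h ih => rw [Finset.sum_insert h, Finset.prod_insert h, Real.rpow_add hx, ih]

lemma amgm_prod_le {τ : Type*} (s : Finset τ) (x : τ → ℝ) (hx : ∀ t ∈ s, 0 ≤ x t) :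
    ∏ t ∈ s, x t ≤ ((∑ t ∈ s, x t) / s.card) ^ ((s.card : ℕ) : ℝ) := by
  rcases Finset.eq_empty_or_nonempty s with rfl | hs
  · simp
  have hk : (0:ℝ) < s.card := by
    exact_mod_cast Finset.card_pos.mpr hs
  have hkne : (s.card : ℝ) ≠ 0 := ne_of_gt hk
  have h := Real.geom_mean_le_arith_mean_weighted s (fun _ => 1 / (s.card:ℝ)) x
    (fun i _ => by positivity) (by rw [Finset.sum_const, nsmul_eq_mul]; field_simp) hx
  have h2 : ∑ i ∈ s, (1 / (s.card:ℝ)) * x i = (∑ t ∈ s, x t) / s.card := by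
    rw [Finset.sum_div]
    apply Finset.sum_congr rfl
    intro t _
    field_simp
  rw [h2] at h
  calc ∏ t ∈ s, x t = (∏ t ∈ s, x t ^ (1 / (s.card:ℝ))) ^ ((s.card:ℕ):ℝ) := by
        rw [← Real.finset_prod_rpow _ _ (fun t ht => Real.rpow_nonneg (hx t ht) _)]
        apply Finset.prod_congr rfl
        intro t ht
        rw [← Real.rpow_mul (hx t ht), one_div, inv_mul_cancel₀ hkne, Real.rpow_one]
    _ ≤ ((∑ t ∈ s, x t) / s.card) ^ ((s.card:ℕ):ℝ) := by
        apply Real.rpow_le_rpow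
          (Finset.prod_nonneg fun t ht => Real.rpow_nonneg (hx t ht) _) h
          (by positivity)

end Helpers

/-- Log-concavity of the capacity along convex combinations in `L_n`: if
`α = Σ_j γ_j α^j` with `γ_j ≥ 0`, `Σ γ_j = 1` and `α, α^j ∈ L_n`, then
`Cap^{(α)} ≥ Π_j (Cap^{(α^j)})^{γ_j}`.  Here `A^{(α)}` (the tuple in which `A i` appears
with multiplicity `α i`) is realized as `A ∘ f` for any `f` whose fibre over `i` has
cardinality `α i`. -/
theorem capacity_log_concave {n m : ℕ}
    (A : Fin n → Matrix (Fin n) (Fin n) ℂ) (hA : ∀ i, (A i).PosSemidef)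
    (α : Fin n → ℕ) (αs : Fin m → Fin n → ℕ) (γ : Fin m → ℝ)
    (hα : ∑ i, α i = n) (hαs : ∀ j, ∑ i, αs j i = n)
    (hγ : ∀ j, 0 ≤ γ j) (hγ1 : ∑ j, γ j = 1)
    (hconv : ∀ i, (α i : ℝ) = ∑ j, γ j * (αs j i : ℝ))
    (f : Fin n → Fin n)
    (hf : ∀ i, (Finset.univ.filter fun t => f t = i).card = α i)
    (g : Fin m → Fin n → Fin n)
    (hg : ∀ j i, (Finset.univ.filter fun t => g j t = i).card = αs j i) :
    ∏ j, (capacity (A ∘ g j)) ^ (γ j) ≤ capacity (A ∘ f) := by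
  classical
  -- trivial case n = 0
  rcases Nat.eq_zero_or_pos n with hn0 | hnpos
  · subst hn0
    have hcap1 : ∀ T : Fin 0 → Matrix (Fin 0) (Fin 0) ℂ, capacity T = 1 := by
      intro T
      unfold capacity
      have hset : {y : ℝ | ∃ x : Fin 0 → ℝ, (∀ i, 0 < x i) ∧ (∏ i, x i = 1) ∧
          y = ((∑ i, (x i : ℂ) • T i).det).re} = {1} := by
        ext z
        constructor
        · rintro ⟨x, -, -, rfl⟩
          simp [Matrix.det_fin_zero]
        · rintro rfl
          exact ⟨fun _ => 1, fun i => i.elim0, by simp, by simp [Matrix.det_fin_zero]⟩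
      rw [hset, csInf_singleton]
    rw [hcap1]
    rw [Finset.prod_congr rfl (fun j _ => by rw [hcap1 (A ∘ g j), Real.one_rpow]),
      Finset.prod_const_one]
  have hnne : (n : ℝ) ≠ 0 := by positivity
  -- basic facts about the capacity sets
  have hmem0 : ∀ (h : Fin n → Fin n) (z : ℝ),
      z ∈ {y : ℝ | ∃ x : Fin n → ℝ, (∀ i, 0 < x i) ∧ (∏ i, x i = 1) ∧
        y = ((∑ i, (x i : ℂ) • (A ∘ h) i).det).re} → 0 ≤ z := by
    rintro h z ⟨x, hxpos, -, rfl⟩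
    exact psd_det_re_nonneg (psd_sum Finset.univ (fun i => A (h i)) x
      (fun i _ => hA (h i)) (fun i _ => (hxpos i).le))
  have hbdd : ∀ h : Fin n → Fin n, BddBelow {y : ℝ | ∃ x : Fin n → ℝ, (∀ i, 0 < x i) ∧
      (∏ i, x i = 1) ∧ y = ((∑ i, (x i : ℂ) • (A ∘ h) i).det).re} :=
    fun h => ⟨0, fun z hz => hmem0 h z hz⟩
  have hcap0 : ∀ h : Fin n → Fin n, 0 ≤ capacity (A ∘ h) :=
    fun h => Real.sInf_nonneg (fun z hz => hmem0 h z hz)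
  refine le_csInf ⟨_, ⟨fun _ => (1:ℝ), fun _ => one_pos, by simp, rfl⟩⟩ ?_
  rintro z ⟨x, hxpos, hx1, rfl⟩
  -- fiber sums
  set y : Fin n → ℝ := fun i => ∑ t ∈ Finset.univ.filter (fun t => f t = i), x t with hy
  have hy0 : ∀ i, 0 ≤ y i := by
    intro i; simp only [hy]; exact Finset.sum_nonneg fun t _ => (hxpos t).le
  have hyzero : ∀ i, α i = 0 → y i = 0 := by
    intro i hi
    simp only [hy]
    have he : Finset.univ.filter (fun t => f t = i) = ∅ :=
      Finset.card_eq_zero.mp (by rw [hf i, hi])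
    rw [he, Finset.sum_empty]
  have hypos : ∀ i, α i ≠ 0 → 0 < y i := by
    intro i hi
    simp only [hy]
    apply Finset.sum_pos (fun t _ => hxpos t)
    rw [← Finset.card_pos, hf i]
    exact Nat.pos_of_ne_zero hi
  have hαposR : ∀ i, α i ≠ 0 → 0 < (α i : ℝ) := by
    intro i hi; exact_mod_cast Nat.pos_of_ne_zero hi
  -- positivity of α on supports of active αs
  have hαpos : ∀ j, γ j ≠ 0 → ∀ i, αs j i ≠ 0 → α i ≠ 0 := by
    intro j hj i hi
    have hγj : 0 < γ j := lt_of_le_of_ne (hγ j) (Ne.symm hj)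
    have h1 : (0:ℝ) < γ j * αs j i :=
      mul_pos hγj (by exact_mod_cast Nat.pos_of_ne_zero hi)
    have h2 : γ j * (αs j i : ℝ) ≤ ∑ j', γ j' * αs j' i :=
      Finset.single_le_sum (f := fun j' => γ j' * (αs j' i : ℝ))
        (fun j' _ => mul_nonneg (hγ j') (Nat.cast_nonneg _)) (Finset.mem_univ j)
    intro hzero
    rw [← hconv i, hzero] at h2
    simp only [Nat.cast_zero] at h2
    linarith
  -- the main matrix as a combination of the A i
  have hMf : ∑ t, (x t : ℂ) • (A ∘ f) t = ∑ i, ((y i : ℝ) : ℂ) • A i := by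
    rw [← Finset.sum_fiberwise Finset.univ f (fun t => (x t : ℂ) • (A ∘ f) t)]
    apply Finset.sum_congr rfl
    intro i _
    have e : ∀ t ∈ Finset.univ.filter (fun t => f t = i),
        (x t : ℂ) • (A ∘ f) t = (x t : ℂ) • A i := by
      intro t ht
      rw [Finset.mem_filter] at ht
      simp [Function.comp_apply, ht.2]
    rw [Finset.sum_congr rfl e, ← Finset.sum_smul]
    simp only [hy, Complex.ofReal_sum]
  -- the auxiliary matrices
  set v : Fin m → Fin n → ℝ := fun j i => (αs j i : ℝ) * (y i / (α i : ℝ)) with hv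
  have hv0 : ∀ j i, 0 ≤ v j i := by
    intro j i
    simp only [hv]
    exact mul_nonneg (Nat.cast_nonneg _) (div_nonneg (hy0 i) (Nat.cast_nonneg _))
  set Mm : Fin m → Matrix (Fin n) (Fin n) ℂ := fun j => ∑ i, ((v j i : ℝ) : ℂ) • A i with hMm
  have hMmpsd : ∀ j, (Mm j).PosSemidef := by
    intro j
    simp only [hMm]
    exact psd_sum Finset.univ A (v j) (fun i _ => hA i) (fun i _ => hv0 j i)
  have hsumv : ∀ i, ∑ j, γ j * v j i = y i := by
    intro i
    by_cases hai : α i = 0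
    · have hvz : ∀ j, v j i = 0 := by
        intro j
        simp only [hv]
        rw [hai]
        simp
      simp only [hvz, mul_zero, Finset.sum_const_zero, hyzero i hai]
    · have e : ∑ j, γ j * v j i = (y i / α i) * ∑ j, γ j * αs j i := by
        rw [Finset.mul_sum]
        apply Finset.sum_congr rfl
        intro j _
        simp only [hv]
        ring
      rw [e, ← hconv i]
      field_simp
  have hMfM : ∑ j, (γ j : ℂ) • Mm j = ∑ i, ((y i : ℝ) : ℂ) • A i := by
    have e : ∀ j, (γ j : ℂ) • Mm j = ∑ i, ((γ j * v j i : ℝ) : ℂ) • A i := by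
      intro j
      simp only [hMm]
      rw [Finset.smul_sum]
      apply Finset.sum_congr rfl
      intro i _
      rw [smul_smul, ← Complex.ofReal_mul]
    rw [Finset.sum_congr rfl (fun j _ => e j), Finset.sum_comm]
    apply Finset.sum_congr rfl
    intro i _
    rw [← Finset.sum_smul, ← Complex.ofReal_sum, hsumv i]
  -- the scaling factors
  set P : Fin m → ℝ := fun j => ∏ i, (y i / (α i : ℝ)) ^ ((αs j i : ℕ) : ℝ) with hP
  have hP0 : ∀ j, 0 ≤ P j := by
    intro j
    simp only [hP]
    exact Finset.prod_nonneg fun i _ =>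
      Real.rpow_nonneg (div_nonneg (hy0 i) (Nat.cast_nonneg _)) _
  have hPpos : ∀ j, γ j ≠ 0 → 0 < P j := by
    intro j hj
    simp only [hP]
    apply Finset.prod_pos
    intro i _
    by_cases hzi : αs j i = 0
    · rw [hzi]
      simp
    · have hai := hαpos j hj i hzi
      exact Real.rpow_pos_of_pos (div_pos (hypos i hai) (hαposR i hai)) _
  set sj : Fin m → ℝ := fun j => P j ^ (-(1:ℝ)/(n:ℝ)) with hsj
  have hsj0 : ∀ j, 0 ≤ sj j := by
    intro j
    simp only [hsj]
    exact Real.rpow_nonneg (hP0 j) _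
  have hsjn : ∀ j, γ j ≠ 0 → sj j ^ n = (P j)⁻¹ := by
    intro j hj
    simp only [hsj]
    rw [← Real.rpow_natCast (P j ^ (-(1:ℝ)/(n:ℝ))) n, ← Real.rpow_mul (hP0 j)]
    have e : (-(1:ℝ)/(n:ℝ)) * (n:ℝ) = -1 := by field_simp
    rw [e, Real.rpow_neg_one]
  -- capacity bound for each j with γ j ≠ 0
  have capj_le : ∀ j, γ j ≠ 0 → capacity (A ∘ g j) ≤ sj j ^ n * (Mm j).det.re := by
    intro j hj
    have hfib : ∀ t : Fin n, αs j (g j t) ≠ 0 := by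
      intro t
      rw [← hg j (g j t)]
      have ht : t ∈ Finset.univ.filter (fun s => g j s = g j t) := by simp
      exact Finset.card_ne_zero_of_mem ht
    have hFpos : ∀ t, 0 < y (g j t) / (α (g j t) : ℝ) := by
      intro t
      have hai := hαpos j hj (g j t) (hfib t)
      exact div_pos (hypos _ hai) (hαposR _ hai)
    have hsjpos : 0 < sj j := by
      simp only [hsj]
      exact Real.rpow_pos_of_pos (hPpos j hj) _
    have hPalt : ∏ t, (y (g j t) / (α (g j t) : ℝ)) = P j := by
      rw [← Finset.prod_fiberwise' Finset.univ (g j) (fun i => y i / (α i : ℝ))]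
      simp only [hP]
      apply Finset.prod_congr rfl
      intro i _
      rw [Finset.prod_const, hg j i, Real.rpow_natCast]
    apply csInf_le (hbdd (g j))
    refine ⟨fun t => sj j * (y (g j t) / (α (g j t) : ℝ)),
      fun t => mul_pos hsjpos (hFpos t), ?_, ?_⟩
    · rw [Finset.prod_mul_distrib, Finset.prod_const, Finset.card_univ, Fintype.card_fin,
        hPalt, hsjn j hj, inv_mul_cancel₀ (ne_of_gt (hPpos j hj))]
    · have e1 : ∑ t, ((sj j * (y (g j t) / (α (g j t) : ℝ)) : ℝ) : ℂ) • (A ∘ g j) t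
          = (sj j : ℂ) • Mm j := by
        have e2 : ∀ t : Fin n, ((sj j * (y (g j t) / (α (g j t) : ℝ)) : ℝ) : ℂ) • (A ∘ g j) t
            = (sj j : ℂ) • (((y (g j t) / (α (g j t) : ℝ) : ℝ) : ℂ) • A (g j t)) := by
          intro t
          rw [Complex.ofReal_mul, smul_smul]
          rfl
        rw [Finset.sum_congr rfl (fun t _ => e2 t), ← Finset.smul_sum]
        congr 1
        rw [← Finset.sum_fiberwise Finset.univ (g j)
          (fun t => ((y (g j t) / (α (g j t) : ℝ) : ℝ) : ℂ) • A (g j t))]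
        simp only [hMm]
        apply Finset.sum_congr rfl
        intro i _
        have e3 : ∀ t ∈ Finset.univ.filter (fun t => g j t = i),
            ((y (g j t) / (α (g j t) : ℝ) : ℝ) : ℂ) • A (g j t)
            = ((y i / (α i : ℝ) : ℝ) : ℂ) • A i := by
          intro t ht
          rw [Finset.mem_filter] at ht
          rw [ht.2]
        rw [Finset.sum_congr rfl e3, Finset.sum_const, hg j i,
          ← Nat.cast_smul_eq_nsmul ℂ, smul_smul]
        congr 1
        simp only [hv]
        rw [← Complex.ofReal_natCast, ← Complex.ofReal_mul]
      show sj j ^ n * (Mm j).det.re = _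
      rw [e1, Matrix.det_smul, Fintype.card_fin, ← Complex.ofReal_pow, Complex.re_ofReal_mul]
  -- the AM-GM bound : 1 ≤ ∏ i (y i / α i)^(α i)
  have hyQ : (1:ℝ) ≤ ∏ i, (y i / (α i : ℝ)) ^ ((α i : ℕ) : ℝ) := by
    calc (1:ℝ) = ∏ t, x t := hx1.symm
      _ = ∏ i, ∏ t ∈ Finset.univ.filter (fun t => f t = i), x t :=
          (Finset.prod_fiberwise Finset.univ f x).symm
      _ ≤ ∏ i, (y i / (α i : ℝ)) ^ ((α i : ℕ) : ℝ) := by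
          apply Finset.prod_le_prod
          · intro i _
            exact Finset.prod_nonneg fun t _ => (hxpos t).le
          · intro i _
            have h := amgm_prod_le (Finset.univ.filter (fun t => f t = i)) x
              (fun t _ => (hxpos t).le)
            rw [hf i] at h
            exact h
  -- ∏ j (P j)^(γ j) ≥ 1
  have hQ : ∏ j, P j ^ γ j = ∏ i, (y i / (α i : ℝ)) ^ ((α i : ℕ) : ℝ) := by
    have e1 : ∀ j, P j ^ γ j = ∏ i, (y i / (α i : ℝ)) ^ (((αs j i : ℕ) : ℝ) * γ j) := by
      intro j
      simp only [hP]
      rw [← Real.finset_prod_rpow _ _ (fun i _ =>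
        Real.rpow_nonneg (div_nonneg (hy0 i) (Nat.cast_nonneg _)) _)]
      apply Finset.prod_congr rfl
      intro i _
      rw [← Real.rpow_mul (div_nonneg (hy0 i) (Nat.cast_nonneg _))]
    rw [Finset.prod_congr rfl (fun j _ => e1 j), Finset.prod_comm]
    apply Finset.prod_congr rfl
    intro i _
    by_cases hai : α i = 0
    · have hz : ∀ j, ((αs j i : ℕ) : ℝ) * γ j = 0 := by
        have hsum : ∑ j, γ j * (αs j i : ℝ) = 0 := by
          rw [← hconv i, hai, Nat.cast_zero]
        have := (Finset.sum_eq_zero_iff_of_nonneg (fun j _ =>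
          mul_nonneg (hγ j) (Nat.cast_nonneg _))).mp hsum
        intro j
        rw [mul_comm]
        exact this j (Finset.mem_univ j)
      rw [Finset.prod_congr rfl (fun j _ => by rw [hz j, Real.rpow_zero]),
        Finset.prod_const_one, hai, Nat.cast_zero, Real.rpow_zero]
    · have hbpos : 0 < y i / (α i : ℝ) := div_pos (hypos i hai) (hαposR i hai)
      rw [← rpow_finset_sum hbpos]
      congr 1
      rw [hconv i]
      exact Finset.sum_congr rfl (fun j _ => mul_comm _ _)
  have hstep3 : ∏ j, (sj j ^ n) ^ γ j ≤ 1 := by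
    have e : ∀ j, (sj j ^ n) ^ γ j = (P j ^ γ j)⁻¹ := by
      intro j
      by_cases hj : γ j = 0
      · rw [hj, Real.rpow_zero, Real.rpow_zero, inv_one]
      · rw [hsjn j hj, Real.inv_rpow (hP0 j)]
    rw [Finset.prod_congr rfl (fun j _ => e j), Finset.prod_inv_distrib]
    apply inv_le_one_of_one_le₀
    rw [hQ]
    exact hyQ
  -- final chain
  calc ∏ j, capacity (A ∘ g j) ^ γ j
      ≤ ∏ j, (sj j ^ n * (Mm j).det.re) ^ γ j := by
        apply Finset.prod_le_prod (fun j _ => Real.rpow_nonneg (hcap0 (g j)) _)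
        intro j _
        by_cases hj : γ j = 0
        · rw [hj, Real.rpow_zero, Real.rpow_zero]
        · exact Real.rpow_le_rpow (hcap0 (g j)) (capj_le j hj) (hγ j)
    _ = (∏ j, (sj j ^ n) ^ γ j) * ∏ j, ((Mm j).det.re) ^ γ j := by
        rw [← Finset.prod_mul_distrib]
        exact Finset.prod_congr rfl fun j _ =>
          Real.mul_rpow (pow_nonneg (hsj0 j) n) (psd_det_re_nonneg (hMmpsd j))
    _ ≤ 1 * ((∑ i, (x i : ℂ) • (A ∘ f) i).det).re := by
        apply mul_le_mul hstep3 ?_ (Finset.prod_nonneg fun j _ =>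
          Real.rpow_nonneg (psd_det_re_nonneg (hMmpsd j)) _) zero_le_one
        calc ∏ j, ((Mm j).det.re) ^ γ j
            ≤ ((∑ j, (γ j : ℂ) • Mm j).det).re :=
              det_re_concave Finset.univ Mm (fun j _ => hMmpsd j) γ (fun j _ => hγ j) hγ1
          _ = _ := by rw [hMfM, ← hMf]
    _ = _ := one_mul _
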